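/- Let d ≥ 2 and assume that F_{GP_{d−1}} ⊆ F_{SGP_{d−1}}. If p, q ∈ GP_d and p ≃_d q, then p ∈ GP'_d if and only if q ∈ GP'_d. -/
import Mathlib


/-- `‖a‖`: the distance from a real number `a` to the nearest integer. -/
noncomputable def distToInt (a : ℝ) : ℝ := sInf (Set.range fun m : ℤ => |a - (m : ℝ)|)

/-- `⌈a⌉`: the least integer `m` with `|a − m| = ‖a‖`. -/
noncomputable def nint (a : ℝ) : ℤ := sInf { m : ℤ | |a - (m : ℝ)| = distToInt a }

/-- The class `GP d` of generalized polynomials `ℤ → ℝ` of degree `≤ d`: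
`GP 1` is generated by the maps `n ↦ a·n`; each `GP d` contains `GP e` for `e < d` and
the functions `n ↦ a₀ n^{p₀} ⌈f₁(n)⌉⋯⌈f_k(n)⌉` with `f_l ∈ GP (p l)` and
`p₀ + Σ p_l = d`; and each `GP d` is closed under `⌈·⌉`, scalar multiples and sums.
(No constructor produces `GP 0`, so the degrees `p l` are automatically `≥ 1`.) -/
inductive GP : ℕ → (ℤ → ℝ) → Prop where
  | base (a : ℝ) : GP 1 (fun n => a * (n : ℝ))
  | incl {d e : ℕ} {f : ℤ → ℝ} (hf : GP e f) (hed : e < d) : GP d f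
  | mono {d : ℕ} (a₀ : ℝ) (p₀ k : ℕ) (p : Fin k → ℕ) (f : Fin k → ℤ → ℝ)
      (hf : ∀ l, GP (p l) (f l)) (hsum : p₀ + ∑ l, p l = d) (hd : 1 ≤ d) :
      GP d (fun n => a₀ * (n : ℝ) ^ p₀ * ∏ l, (nint (f l n) : ℝ))
  | ceil {d : ℕ} {f : ℤ → ℝ} (hf : GP d f) : GP d (fun n => (nint (f n) : ℝ))
  | smul {d : ℕ} {f : ℤ → ℝ} (c : ℝ) (hf : GP d f) : GP d (fun n => c * f n)
  | add {d : ℕ} {f g : ℤ → ℝ} (hf : GP d f) (hg : GP d g) : GP d (fun n => f n + g n)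

/-- `L(a₁,…,a_ℓ)`: `L(a₁) = a₁` and `L(a₁,a₂,…,a_ℓ) = a₁⌈L(a₂,…,a_ℓ)⌉`. -/
noncomputable def Lfun : List ℝ → ℝ
  | [] => 0
  | [a] => a
  | a :: b :: rest => a * (nint (Lfun (b :: rest)) : ℝ)

/-- The class `SGP d` of special generalized polynomials of degree `≤ d`:
the functions `n ↦ L(n^{j₁}a₁,…,n^{j_ℓ}a_ℓ)` with `1 ≤ ℓ ≤ d`, `j_t ≥ 1`, `Σ j_t ≤ d`. -/
def SGP (d : ℕ) (f : ℤ → ℝ) : Prop :=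
  ∃ (ℓ : ℕ) (a : Fin ℓ → ℝ) (j : Fin ℓ → ℕ),
    1 ≤ ℓ ∧ ℓ ≤ d ∧ (∀ t, 1 ≤ j t) ∧ (∑ t, j t) ≤ d ∧
    f = fun n : ℤ => Lfun (List.ofFn fun t => (n : ℝ) ^ (j t) * a t)

/-- The family `F_{GP_d}` of subsets of `ℤ` containing some set
`⋂_{i=1}^k {n : ‖P_i(n)‖ < ε_i}` with `P_i ∈ GP d` and `ε_i > 0`. -/
def FGP (d : ℕ) : Set (Set ℤ) :=
  { A | ∃ (k : ℕ) (P : Fin k → ℤ → ℝ) (ε : Fin k → ℝ),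
      1 ≤ k ∧ (∀ i, GP d (P i)) ∧ (∀ i, 0 < ε i) ∧
      (⋂ i, { n : ℤ | distToInt (P i n) < ε i }) ⊆ A }

/-- The family `F_{SGP_d}`, defined like `F_{GP_d}` with `SGP d` in place of `GP d`. -/
def FSGP (d : ℕ) : Set (Set ℤ) :=
  { A | ∃ (k : ℕ) (P : Fin k → ℤ → ℝ) (ε : Fin k → ℝ),
      1 ≤ k ∧ (∀ i, SGP d (P i)) ∧ (∀ i, 0 < ε i) ∧
      (⋂ i, { n : ℤ | distToInt (P i n) < ε i }) ⊆ A }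

/-- `SW d`: the functions `n ↦ ∏_{i=1}^ℓ (w_i(n) − ⌈w_i(n)⌉)` with `ℓ ≥ 2`, `r_i ≥ 1`,
`w_i ∈ GP (r i)` and `r₁+⋯+r_ℓ ≤ d`. -/
def SW (d : ℕ) (g : ℤ → ℝ) : Prop :=
  ∃ (ℓ : ℕ) (r : Fin ℓ → ℕ) (w : Fin ℓ → ℤ → ℝ),
    2 ≤ ℓ ∧ (∀ i, 1 ≤ r i) ∧ (∀ i, GP (r i) (w i)) ∧ (∑ i, r i) ≤ d ∧
    g = fun n : ℤ => ∏ i, (w i n - (nint (w i n) : ℝ))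

/-- `W d`: finite real linear combinations of functions in `SW d`. -/
def Wset (d : ℕ) : Set (ℤ → ℝ) :=
  { p | ∃ (m : ℕ) (c : Fin m → ℝ) (g : Fin m → ℤ → ℝ),
      1 ≤ m ∧ (∀ j, SW d (g j)) ∧ p = fun n : ℤ => ∑ j, c j * g j n }

/-- `q₁ ≃_d q₂`: there exist `h₁ ∈ GP (d−1)` and `h₂ ∈ W d` with
`q₂(n) − q₁(n) − h₁(n) − h₂(n) ∈ ℤ` for every `n`. -/
def GPequiv (d : ℕ) (q₁ q₂ : ℤ → ℝ) : Prop :=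
  ∃ h₁ h₂ : ℤ → ℝ, GP (d - 1) h₁ ∧ h₂ ∈ Wset d ∧
    ∀ n : ℤ, ∃ m : ℤ, q₂ n - q₁ n - h₁ n - h₂ n = (m : ℝ)

/-- `GP'_d = {p ∈ GP d : ∀ ε > 0, {n : ‖p(n)‖ < ε} ∈ F_{SGP_d}}`. -/
def GP' (d : ℕ) : Set (ℤ → ℝ) :=
  { p | GP d p ∧ ∀ ε : ℝ, 0 < ε → { n : ℤ | distToInt (p n) < ε } ∈ FSGP d }

lemma distToInt_le (a : ℝ) (m : ℤ) : distToInt a ≤ |a - m| :=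
  csInf_le ⟨0, by rintro x ⟨k, rfl⟩; positivity⟩ ⟨m, rfl⟩

lemma distToInt_eq_round (a : ℝ) : distToInt a = |a - round a| := by
  refine le_antisymm (distToInt_le a _) ?_
  refine le_csInf ⟨|a - round a|, round a, rfl⟩ ?_
  rintro x ⟨m, rfl⟩
  by_cases h : m = round a
  · simp [h]
  · have h1 : (1:ℝ) ≤ |(m:ℝ) - round a| := by
      have : (1:ℤ) ≤ |m - round a| := Int.one_le_abs (sub_ne_zero.mpr h)
      calc (1:ℝ) ≤ ((|m - round a| : ℤ) : ℝ) := by exact_mod_cast this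
        _ = |(m:ℝ) - round a| := by push_cast; rfl
    have h2 : |a - round a| ≤ 1/2 := abs_sub_round a
    have h3 : |(m:ℝ) - round a| ≤ |a - (m:ℝ)| + |a - round a| := by
      calc |(m:ℝ) - round a| = |(a - round a) - (a - m)| := by ring_nf
        _ ≤ |a - round a| + |a - (m:ℝ)| := abs_sub _ _
        _ = |a - (m:ℝ)| + |a - round a| := by ring
    linarith

lemma distToInt_nonneg (a : ℝ) : 0 ≤ distToInt a := by
  rw [distToInt_eq_round]; positivity

lemma distToInt_add_int (a : ℝ) (m : ℤ) : distToInt (a + m) = distToInt a := by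
  have key : ∀ (b : ℝ) (k : ℤ), distToInt (b + k) ≤ distToInt b := by
    intro b k
    rw [distToInt_eq_round b]
    have h := distToInt_le (b + k) (round b + k)
    have : b + (k:ℝ) - ((round b + k : ℤ) : ℝ) = b - round b := by push_cast; ring
    rwa [this] at h
  refine le_antisymm (key a m) ?_
  have h := key (a + m) (-m)
  simpa using h

lemma distToInt_add_le (a b : ℝ) : distToInt (a + b) ≤ distToInt a + distToInt b := by
  have h := distToInt_le (a + b) (round a + round b)
  rw [distToInt_eq_round a, distToInt_eq_round b]
  refine h.trans ?_
  calc |a + b - ((round a + round b : ℤ) : ℝ)| = |(a - round a) + (b - round b)| := by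
        push_cast; ring_nf
    _ ≤ |a - round a| + |b - round b| := abs_add_le _ _

lemma distToInt_le_abs (a : ℝ) : distToInt a ≤ |a| := by simpa using distToInt_le a 0

lemma abs_sub_nint (a : ℝ) : |a - nint a| = distToInt a := by
  have hmem : round a ∈ {m : ℤ | |a - (m:ℝ)| = distToInt a} := (distToInt_eq_round a).symm
  have hbdd : BddBelow {m : ℤ | |a - (m:ℝ)| = distToInt a} := by
    refine ⟨⌊a⌋ - 1, fun m hm => ?_⟩
    have h1 : |a - (m:ℝ)| ≤ 1/2 := by
      rw [Set.mem_setOf_eq] at hm; rw [hm, distToInt_eq_round a]; exact abs_sub_round a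
    have h2 := (abs_le.mp h1).2
    have h3 : (⌊a⌋ : ℝ) - 1 ≤ (m:ℝ) := by have := Int.floor_le a; linarith
    exact_mod_cast h3
  have := Int.csInf_mem (s := {m : ℤ | |a - (m:ℝ)| = distToInt a}) ⟨_, hmem⟩ hbdd
  exact this

lemma GP_mono' {e d : ℕ} {f : ℤ → ℝ} (h : GP e f) (hed : e ≤ d) : GP d f := by
  rcases lt_or_eq_of_le hed with h' | h'
  · exact GP.incl h h'
  · exact h' ▸ h

lemma SGP_mono {e d : ℕ} {f : ℤ → ℝ} (h : SGP e f) (hed : e ≤ d) : SGP d f := by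
  obtain ⟨ℓ, a, j, h1, h2, h3, h4, h5⟩ := h
  exact ⟨ℓ, a, j, h1, h2.trans hed, h3, h4.trans hed, h5⟩

lemma FSGP_mono_deg {e d : ℕ} (hed : e ≤ d) : FSGP e ⊆ FSGP d := by
  rintro A ⟨k, P, ε, h1, h2, h3, h4⟩
  exact ⟨k, P, ε, h1, fun i => SGP_mono (h2 i) hed, h3, h4⟩

lemma FSGP_mono_set {d : ℕ} {A B : Set ℤ} (h : A ∈ FSGP d) (hAB : A ⊆ B) : B ∈ FSGP d := by
  obtain ⟨k, P, ε, h1, h2, h3, h4⟩ := h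
  exact ⟨k, P, ε, h1, h2, h3, h4.trans hAB⟩

lemma FSGP_inter {d : ℕ} {A B : Set ℤ} (hA : A ∈ FSGP d) (hB : B ∈ FSGP d) :
    A ∩ B ∈ FSGP d := by
  obtain ⟨k1, P1, e1, hk1, hP1, he1, hs1⟩ := hA
  obtain ⟨k2, P2, e2, hk2, hP2, he2, hs2⟩ := hB
  refine ⟨k1 + k2, Fin.addCases P1 P2, Fin.addCases e1 e2, by omega, ?_, ?_, ?_⟩
  · intro i
    induction i using Fin.addCases with
    | left i => simpa using hP1 i
    | right i => simpa using hP2 i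
  · intro i
    induction i using Fin.addCases with
    | left i => simpa using he1 i
    | right i => simpa using he2 i
  · intro n hn
    simp only [Set.mem_iInter, Set.mem_setOf_eq] at hn
    constructor
    · apply hs1
      simp only [Set.mem_iInter, Set.mem_setOf_eq]
      intro i
      have := hn (Fin.castAdd k2 i)
      simpa using this
    · apply hs2
      simp only [Set.mem_iInter, Set.mem_setOf_eq]
      intro i
      have := hn (Fin.natAdd k1 i)
      simpa using this

lemma W_small {d : ℕ} {h₂ : ℤ → ℝ} (hW : h₂ ∈ Wset d) {ε : ℝ} (hε : 0 < ε) :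
    {n : ℤ | |h₂ n| < ε} ∈ FGP (d - 1) := by
  obtain ⟨m, c, g, hm, hg, hfe⟩ := hW
  choose ℓ r w hℓ hr hw hsumr hge using hg
  set C : ℝ := ∑ j, |c j| with hC
  have hC0 : 0 ≤ C := Finset.sum_nonneg fun j _ => abs_nonneg _
  set δ : ℝ := min 1 (ε / (2 * (C + 1))) with hδdef
  have hδ0 : 0 < δ := lt_min one_pos (by positivity)
  have hδ1 : δ ≤ 1 := min_le_left _ _
  have hδε : C * δ < ε := by
    have h1 : δ ≤ ε / (2 * (C + 1)) := min_le_right _ _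
    have h2 : C * δ ≤ C * (ε / (2 * (C + 1))) := mul_le_mul_of_nonneg_left h1 hC0
    have h3 : C * (ε / (2 * (C + 1))) < ε := by
      rw [mul_div_assoc', div_lt_iff₀ (by positivity)]
      nlinarith
    linarith
  haveI hne : Nonempty (Σ j : Fin m, Fin (ℓ j)) :=
    ⟨⟨⟨0, hm⟩, ⟨0, by have := hℓ ⟨0, hm⟩; omega⟩⟩⟩
  refine ⟨Fintype.card (Σ j : Fin m, Fin (ℓ j)),
    fun i => w ((Fintype.equivFin (Σ j : Fin m, Fin (ℓ j))).symm i).1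
      ((Fintype.equivFin (Σ j : Fin m, Fin (ℓ j))).symm i).2,
    fun _ => δ, Fintype.card_pos, ?_, fun _ => hδ0, ?_⟩
  · intro i
    set s := (Fintype.equivFin (Σ j : Fin m, Fin (ℓ j))).symm i with hs
    have h1 : ∑ t, r s.1 t ≤ d := hsumr s.1
    have h2 : r s.1 s.2 + (ℓ s.1 - 1) ≤ ∑ t, r s.1 t := by
      have heq : ∑ t, r s.1 t
          = r s.1 s.2 + ∑ t ∈ Finset.univ.erase s.2, r s.1 t :=
        (Finset.add_sum_erase Finset.univ (r s.1) (Finset.mem_univ s.2)).symm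
      have hcard : (Finset.univ.erase s.2).card = ℓ s.1 - 1 := by
        simp [Finset.card_erase_of_mem]
      have h3 : (Finset.univ.erase s.2).card ≤ ∑ t ∈ Finset.univ.erase s.2, r s.1 t := by
        calc (Finset.univ.erase s.2).card
            = ∑ _t ∈ Finset.univ.erase s.2, 1 := by simp
          _ ≤ _ := Finset.sum_le_sum fun t _ => hr s.1 t
      omega
    have h4 := hℓ s.1
    exact GP_mono' (hw s.1 s.2) (by omega)
  · intro n hn
    simp only [Set.mem_iInter, Set.mem_setOf_eq] at hn
    have hsmall : ∀ (j : Fin m) (i : Fin (ℓ j)), distToInt (w j i n) < δ := by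
      intro j i
      have := hn (Fintype.equivFin (Σ j : Fin m, Fin (ℓ j)) ⟨j, i⟩)
      rwa [Equiv.symm_apply_apply] at this
    have hgj : ∀ j, |g j n| ≤ δ := by
      intro j
      rw [hge j]
      simp only
      rw [Finset.abs_prod]
      calc ∏ i, |w j i n - (nint (w j i n) : ℝ)| ≤ ∏ _i : Fin (ℓ j), δ := by
            refine Finset.prod_le_prod (fun i _ => abs_nonneg _) fun i _ => ?_
            rw [abs_sub_nint]
            exact (hsmall j i).le
        _ = δ ^ ℓ j := by simp
        _ ≤ δ := pow_le_of_le_one hδ0.le hδ1 (by have := hℓ j; omega)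
    simp only [Set.mem_setOf_eq, hfe]
    calc |∑ j, c j * g j n| ≤ ∑ j, |c j * g j n| := Finset.abs_sum_le_sum_abs _ _
      _ ≤ ∑ j, |c j| * δ := Finset.sum_le_sum fun j _ => by
          rw [abs_mul]; exact mul_le_mul_of_nonneg_left (hgj j) (abs_nonneg _)
      _ = C * δ := by rw [hC, Finset.sum_mul]
      _ < ε := hδε

lemma GPequiv_symm' {d : ℕ} {p q : ℤ → ℝ} (h : GPequiv d p q) : GPequiv d q p := by
  obtain ⟨h₁, h₂, hh1, ⟨m, c, g, hm, hg, hfe⟩, hint⟩ := h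
  refine ⟨fun n => -1 * h₁ n, fun n => ∑ j, (-(c j)) * g j n, GP.smul (-1) hh1,
    ⟨m, fun j => -(c j), g, hm, hg, rfl⟩, ?_⟩
  intro n
  obtain ⟨k, hk⟩ := hint n
  refine ⟨-k, ?_⟩
  have hsum : (∑ j, (-(c j)) * g j n) = -h₂ n := by
    rw [hfe]
    simp [neg_mul, Finset.sum_neg_distrib]
  show p n - q n - (-1 * h₁ n) - (∑ j, -c j * g j n) = ((-k : ℤ) : ℝ)
  rw [hsum]
  push_cast
  linarith

lemma GP'_of_equiv (d : ℕ) (hind : FGP (d - 1) ⊆ FSGP (d - 1))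
    (p q : ℤ → ℝ) (hq : GP d q) (hpq : GPequiv d p q) (hp' : p ∈ GP' d) : q ∈ GP' d := by
  obtain ⟨h₁, h₂, hh1, hh2, hint⟩ := hpq
  refine ⟨hq, fun ε hε => ?_⟩
  have hε3 : 0 < ε / 3 := by linarith
  have hA : {n : ℤ | distToInt (p n) < ε / 3} ∈ FSGP d := hp'.2 _ hε3
  have hB : {n : ℤ | distToInt (h₁ n) < ε / 3} ∈ FSGP d := by
    apply FSGP_mono_deg (Nat.sub_le d 1)
    apply hind
    refine ⟨1, fun _ => h₁, fun _ => ε / 3, le_refl 1, fun _ => hh1, fun _ => hε3, ?_⟩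
    intro n hn
    simpa using Set.mem_iInter.mp hn 0
  have hC : {n : ℤ | |h₂ n| < ε / 3} ∈ FSGP d :=
    FSGP_mono_deg (Nat.sub_le d 1) (hind (W_small hh2 hε3))
  refine FSGP_mono_set (FSGP_inter (FSGP_inter hA hB) hC) ?_
  rintro n ⟨⟨hA', hB'⟩, hC'⟩
  simp only [Set.mem_setOf_eq] at hA' hB' hC' ⊢
  obtain ⟨m, hm⟩ := hint n
  have hqn : q n = (p n + h₁ n + h₂ n) + m := by linarith
  calc distToInt (q n) = distToInt (p n + h₁ n + h₂ n) := by rw [hqn, distToInt_add_int]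
    _ ≤ distToInt (p n + h₁ n) + distToInt (h₂ n) := distToInt_add_le _ _
    _ ≤ distToInt (p n) + distToInt (h₁ n) + |h₂ n| := by
        have := distToInt_add_le (p n) (h₁ n)
        have := distToInt_le_abs (h₂ n)
        linarith
    _ < ε := by linarith

theorem stmt_13 (d : ℕ) (hd : 2 ≤ d) (hind : FGP (d - 1) ⊆ FSGP (d - 1))
    (p q : ℤ → ℝ) (hp : GP d p) (hq : GP d q) (hpq : GPequiv d p q) :
    p ∈ GP' d ↔ q ∈ GP' d :=
  ⟨fun hp' => GP'_of_equiv d hind p q hq hpq hp',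
   fun hq' => GP'_of_equiv d hind q p hp (GPequiv_symm' hpq) hq'⟩
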